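/- arXiv:1405.0982 — 2 statements merged into one kernel-verified Lean document; each statement's English description precedes it below -/
import Mathlib

section
/- If T is a complete, reversible Turing machine, then the transition relation → is the graph of a bijective function F from the configuration space S × A^ℤ to itself; that is, there is a unique function F : S × A^ℤ → S × A^ℤ such that c → c' holds if and only if c' = F(c), and this F is a bijection. -/
/-- The two movement directions for a Turing machine head. -/
inductive Dir : Type
  | left : Dir
  | right : Dir

/-- A Turing machine with state set `S` and tape alphabet `A`: a transition table
consisting of move instructions and write instructions. -/
structure TuringMachine (S A : Type) where
  /-- The move instructions `(s, δ, s')`. -/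
  moves : Set (S × Dir × S)
  /-- The write instructions `(s, a, s', a')`. -/
  writes : Set (S × A × S × A)

/-- Shifting the tape: moving the head in direction `δ`. -/
def shiftTape {A : Type} (δ : Dir) (τ : ℤ → A) : ℤ → A := fun n =>
  match δ with
  | Dir.left => τ (n - 1)
  | Dir.right => τ (n + 1)

/-- Writing the symbol `a'` at position `0` of the tape. -/
def writeTape {A : Type} (a' : A) (τ : ℤ → A) : ℤ → A := fun n =>
  if n = 0 then a' else τ n

/-- The transition relation on the configuration space `S × A^ℤ` determined by the
transition table of the machine `M`. -/
def TMStep {S A : Type} (M : TuringMachine S A) (c c' : S × (ℤ → A)) : Prop :=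
  (∃ δ : Dir, (c.1, δ, c'.1) ∈ M.moves ∧ c'.2 = shiftTape δ c.2) ∨
    (∃ a a' : A, (c.1, a, c'.1, a') ∈ M.writes ∧ c.2 0 = a ∧ c'.2 = writeTape a' c.2)

/-- The machine is deterministic: every configuration has at most one successor. -/
def Deterministic {S A : Type} (M : TuringMachine S A) : Prop :=
  ∀ c c₁ c₂, TMStep M c c₁ → TMStep M c c₂ → c₁ = c₂

/-- The machine is reversible: it is deterministic and every configuration has at most
one predecessor. -/
def Reversible {S A : Type} (M : TuringMachine S A) : Prop :=
  Deterministic M ∧ ∀ c₁ c₂ c', TMStep M c₁ c' → TMStep M c₂ c' → c₁ = c₂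

/-- The machine is complete: every configuration has at least one successor. -/
def Complete {S A : Type} (M : TuringMachine S A) : Prop :=
  ∀ c, ∃ c', TMStep M c c'

def invDir : Dir → Dir
  | Dir.left => Dir.right
  | Dir.right => Dir.left

lemma shift_inv {A : Type} (δ : Dir) (τ : ℤ → A) :
    shiftTape δ (shiftTape (invDir δ) τ) = τ := by
  funext n; cases δ <;> simp only [shiftTape, invDir] <;> congr 1 <;> ring

lemma step_move {S A : Type} {M : TuringMachine S A} {s s' : S} {δ : Dir}
    (h : (s, δ, s') ∈ M.moves) (τ' : ℤ → A) :
    TMStep M (s, shiftTape (invDir δ) τ') (s', τ') :=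
  Or.inl ⟨δ, h, (shift_inv δ τ').symm⟩

lemma step_write {S A : Type} {M : TuringMachine S A} {s s' : S} {a a' : A}
    (h : (s, a, s', a') ∈ M.writes) (τ' : ℤ → A) (h0 : τ' 0 = a') :
    TMStep M (s, writeTape a τ') (s', τ') := by
  refine Or.inr ⟨a, a', h, by simp [writeTape], ?_⟩
  funext n
  by_cases hn : n = 0 <;> simp [writeTape, hn, h0]

section Back

variable {S A : Type} {M : TuringMachine S A}
  (hb : ∀ c₁ c₂ c' : S × (ℤ → A), TMStep M c₁ c' → TMStep M c₂ c' → c₁ = c₂)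

include hb

/-- B2: at most one move into each state. -/
lemma moveTo_unique [Nontrivial A] {s₁ s₂ s' : S} {δ₁ δ₂ : Dir}
    (h₁ : (s₁, δ₁, s') ∈ M.moves) (h₂ : (s₂, δ₂, s') ∈ M.moves) :
    s₁ = s₂ ∧ δ₁ = δ₂ := by
  obtain ⟨x, y, hxy⟩ := exists_pair_ne A
  have key : ∀ τ' : ℤ → A,
      ((s₁, shiftTape (invDir δ₁) τ') : S × (ℤ → A)) = (s₂, shiftTape (invDir δ₂) τ') :=
    fun τ' => hb _ _ _ (step_move h₁ τ') (step_move h₂ τ')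
  have hs : s₁ = s₂ := congrArg Prod.fst (key fun _ => x)
  refine ⟨hs, ?_⟩
  cases δ₁ <;> cases δ₂
  · rfl
  · exfalso
    have := congrFun (congrArg Prod.snd (key fun n => if n = 0 then x else y)) 1
    simp [shiftTape, invDir] at this
    exact hxy this.symm
  · exfalso
    have := congrFun (congrArg Prod.snd (key fun n => if n = 0 then x else y)) 1
    simp [shiftTape, invDir] at this
    exact hxy this
  · rfl

/-- B1: no state has both an incoming move and an incoming write. -/
lemma not_move_and_write_to [Nontrivial A] {s p s' : S} {δ : Dir} {a a' : A}
    (h₁ : (s, δ, s') ∈ M.moves) (h₂ : (p, a, s', a') ∈ M.writes) : False := by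
  obtain ⟨x, y, hxy⟩ := exists_pair_ne A
  set τ' : ℤ → A := fun n => if n = 0 then a' else if n = 1 then x else y with hτ'
  have h0 : τ' 0 = a' := by simp [hτ']
  have key : ((s, shiftTape (invDir δ) τ') : S × (ℤ → A)) = (p, writeTape a τ') :=
    hb _ _ _ (step_move h₁ τ') (step_write h₂ τ' h0)
  have ht := congrArg Prod.snd key
  cases δ
  · -- invDir left = right : τ'(n+1) = writeTape a τ' n ; at n = 1: τ' 2 = τ' 1
    have := congrFun ht 1
    simp [shiftTape, invDir, writeTape, hτ'] at this
    exact hxy this.symm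
  · -- invDir right = left : τ'(n-1) = writeTape a τ' n ; at n = 2: τ' 1 = τ' 2
    have := congrFun ht 2
    simp [shiftTape, invDir, writeTape, hτ'] at this
    exact hxy this
/-- B3: at most one write into each (state, symbol). -/
lemma writeTo_unique {s₁ s₂ s' : S} {a₁ a₂ a' : A}
    (h₁ : (s₁, a₁, s', a') ∈ M.writes) (h₂ : (s₂, a₂, s', a') ∈ M.writes) :
    s₁ = s₂ ∧ a₁ = a₂ := by
  have h0 : (fun _ : ℤ => a') 0 = a' := rfl
  have key : ((s₁, writeTape a₁ fun _ => a') : S × (ℤ → A)) = (s₂, writeTape a₂ fun _ => a') :=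
    hb _ _ _ (step_write h₁ _ h0) (step_write h₂ _ h0)
  refine ⟨congrArg Prod.fst key, ?_⟩
  have := congrFun (congrArg Prod.snd key) 0
  simpa [writeTape] using this

omit hb in
/-- From completeness: each (state, symbol) has an applicable instruction. -/
lemma out_total (hcomp : Complete M) (s : S) (a : A) :
    (∃ δ t, (s, δ, t) ∈ M.moves) ∨ (∃ t b, (s, a, t, b) ∈ M.writes) := by
  obtain ⟨c', hc'⟩ := hcomp (s, fun _ => a)
  rcases hc' with ⟨δ, hm, -⟩ | ⟨a₀, b, hw, ha₀, -⟩
  · exact Or.inl ⟨δ, c'.1, hm⟩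
  · have : a = a₀ := ha₀
    subst this
    exact Or.inr ⟨c'.1, b, hw⟩

/-- The key counting lemma: every (state, symbol) target is reachable. -/
lemma in_total [Finite S] [Finite A] [Nontrivial A] (hcomp : Complete M) (s' : S) (a' : A) :
    (∃ s δ, (s, δ, s') ∈ M.moves) ∨ (∃ s a, (s, a, s', a') ∈ M.writes) := by
  classical
  let Φ : S × A → S × A := fun p =>
    if h : ∃ δ t, (p.1, δ, t) ∈ M.moves then (h.choose_spec.choose, p.2)
    else
      let h' := ((out_total hcomp p.1 p.2).resolve_left h)
      (h'.choose, h'.choose_spec.choose)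
  have hΦ : ∀ p : S × A,
      ((p.1, (Φ p).1) ∈ {q : S × S | ∃ δ, (q.1, δ, q.2) ∈ M.moves} ∧ (Φ p).2 = p.2) ∨
      (p.1, p.2, (Φ p).1, (Φ p).2) ∈ M.writes := by
    intro p
    by_cases h : ∃ δ t, (p.1, δ, t) ∈ M.moves
    · left
      constructor
      · exact ⟨h.choose, by simpa [Φ, h] using h.choose_spec.choose_spec⟩
      · simp [Φ, h]
    · right
      have h' := (out_total hcomp p.1 p.2).resolve_left h
      simpa [Φ, h] using h'.choose_spec.choose_spec
  have hinj : Function.Injective Φ := by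
    rintro ⟨s₁, a₁⟩ ⟨s₂, a₂⟩ heq
    rcases hΦ (s₁, a₁) with ⟨⟨δ₁, hm₁⟩, he₁⟩ | hw₁ <;>
      rcases hΦ (s₂, a₂) with ⟨⟨δ₂, hm₂⟩, he₂⟩ | hw₂
    · rw [heq] at hm₁ he₁
      obtain ⟨hs, -⟩ := moveTo_unique hb hm₁ hm₂
      exact Prod.ext hs (by rw [← he₁, ← he₂])
    · rw [heq] at hm₁
      exact (not_move_and_write_to hb hm₁ hw₂).elim
    · rw [heq] at hw₁
      exact (not_move_and_write_to hb hm₂ hw₁).elim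
    · rw [heq] at hw₁
      obtain ⟨hs, ha⟩ := writeTo_unique hb hw₁ hw₂
      exact Prod.ext hs ha
  have hsurj : Function.Surjective Φ := Finite.surjective_of_injective hinj
  obtain ⟨p, hp⟩ := hsurj (s', a')
  rcases hΦ p with ⟨⟨δ, hm⟩, -⟩ | hw
  · rw [hp] at hm
    exact Or.inl ⟨p.1, δ, hm⟩
  · rw [hp] at hw
    exact Or.inr ⟨p.1, p.2, hw⟩

end Back



/-- For a complete, reversible Turing machine, the transition relation is the graph of a
unique function `F` on the configuration space, and this function is a bijection. -/
theorem complete_reversible_step_is_bijection {S A : Type} [Finite S] [Finite A]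
    (M : TuringMachine S A) (hcomp : Complete M) (hrev : Reversible M) :
    ∃ F : S × (ℤ → A) → S × (ℤ → A),
      (∀ c c', TMStep M c c' ↔ c' = F c) ∧ Function.Bijective F ∧
      ∀ G : S × (ℤ → A) → S × (ℤ → A), (∀ c c', TMStep M c c' ↔ c' = G c) → G = F := by
  classical
  have hdet := hrev.1
  have hb := hrev.2
  let F : S × (ℤ → A) → S × (ℤ → A) := fun c => (hcomp c).choose
  have hstep : ∀ c, TMStep M c (F c) := fun c => (hcomp c).choose_spec
  have hiff : ∀ c c', TMStep M c c' ↔ c' = F c := fun c c' =>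
    ⟨fun h => hdet c c' (F c) h (hstep c), fun h => h ▸ hstep c⟩
  have hinj : Function.Injective F := fun c₁ c₂ h =>
    hb c₁ c₂ (F c₁) (hstep c₁) (h ▸ hstep c₂)
  have hsurj : Function.Surjective F := by
    rcases subsingleton_or_nontrivial A with hA | hA
    · haveI : Subsingleton (ℤ → A) := inferInstance
      haveI : Finite (S × (ℤ → A)) := inferInstance
      exact Finite.surjective_of_injective hinj
    · rintro ⟨s', τ'⟩
      have hpred : ∃ c, TMStep M c (s', τ') := by
        rcases in_total hb hcomp s' (τ' 0) with ⟨s, δ, hm⟩ | ⟨s, a, hw⟩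
        · exact ⟨(s, shiftTape (invDir δ) τ'), step_move hm τ'⟩
        · exact ⟨(s, writeTape a τ'), step_write hw τ' rfl⟩
      obtain ⟨c, hc⟩ := hpred
      exact ⟨c, ((hiff c (s', τ')).mp hc).symm⟩
  refine ⟨F, hiff, ⟨hinj, hsurj⟩, fun G hG => funext fun c => ?_⟩
  exact (hiff c (G c)).mp ((hG c (G c)).mpr rfl)
end

section
/- Let T = (S, A, T) be a complete, reversible Turing machine with states s₁, …, s_m and tape symbols a₁, …, aₙ, and let F : S × A^ℤ → S × A^ℤ be its transition function (the bijection whose graph is the transition relation). Choose nonempty finite binary strings σ₁, …, σ_m such that the dyadic intervals I(σ₁), …, I(σ_m) partition C, and nonempty finite binary strings α₁, …, αₙ such that I(α₁), …, I(αₙ) partition C. Let ε : A^∞ → C be the bijection ε(a_{i₁}, a_{i₂}, …) = α_{i₁}α_{i₂}⋯, and let Φ : S × A^ℤ → C² be the configuration encoding Φ(s_i, τ) = (σ_i ε(τ_L), ε(τ_R)), where τ_L = (τ(−1), τ(−2), τ(−3), …) and τ_R = (τ(0), τ(1), τ(2), …). Then Φ is a bijection and the map f_T = Φ ∘ F ∘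 Φ⁻¹ : C² → C² is an element of the Brin–Thompson group 2V. -/
/-- The Cantor space of infinite binary sequences. -/
abbrev Cantor : Type := ℕ → Bool

/-- Concatenation of a finite binary string with an infinite binary sequence. -/
def cat (α : List Bool) (ω : Cantor) : Cantor := fun k =>
  if h : k < α.length then α.get ⟨k, h⟩ else ω (k - α.length)

/-- The dyadic interval `I(α)`: all infinite binary sequences with prefix `α`. -/
def dyadicI (α : List Bool) : Set Cantor := Set.range (cat α)

/-- The dyadic rectangle `R(α, β) = I(α) × I(β)` in `C²`. -/
def rect (α β : List Bool) : Set (Cantor × Cantor) :=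
  {p | (∃ ψ, p.1 = cat α ψ) ∧ ∃ ω, p.2 = cat β ω}

/-- A finite list of dyadic rectangles forms a dyadic subdivision of `C²`. -/
def IsSubdivision (L : List (List Bool × List Bool)) : Prop :=
  (⋃ r ∈ L, rect r.1 r.2) = Set.univ ∧
    List.Pairwise (fun r s => Disjoint (rect r.1 r.2) (rect s.1 s.2)) L

/-- A numbered pattern pair for `2V`. -/
abbrev PatternPair : Type := List ((List Bool × List Bool) × (List Bool × List Bool))

/-- The numbered pattern pair `pp` represents the map `f`: domains and ranges each form
dyadic subdivisions, and `f` maps each domain rectangle to the corresponding range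
rectangle by prefix replacement. -/
def Represents (pp : PatternPair) (f : Cantor × Cantor → Cantor × Cantor) : Prop :=
  IsSubdivision (pp.map Prod.fst) ∧ IsSubdivision (pp.map Prod.snd) ∧
    ∀ r ∈ pp, ∀ ψ ω : Cantor,
      f (cat r.1.1 ψ, cat r.1.2 ω) = (cat r.2.1 ψ, cat r.2.2 ω)

/-- Membership in the Brin–Thompson group `2V`, viewed inside the permutation group of
`C²`: a homeomorphism acting by prefix replacements on the rectangles of some dyadic
subdivision. -/
def MemTwoV (f : Equiv.Perm (Cantor × Cantor)) : Prop :=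
  Continuous ⇑f ∧ Continuous ⇑f.symm ∧ ∃ pp : PatternPair, Represents pp ⇑f

/-- The infinite concatenation `ε(x) = α (x 0) α (x 1) α (x 2) ⋯`. -/
def epsConcat {n : ℕ} (α : Fin n → List Bool) (x : ℕ → Fin n) : Cantor := fun m =>
  (((List.range (m + 1)).map fun i => α (x i)).flatten).getD m false

/-- The configuration encoding `Φ(s, τ) = (σ_s ε(τ_L), ε(τ_R))`, where
`τ_L = (τ(-1), τ(-2), …)` and `τ_R = (τ(0), τ(1), …)`. -/
def Phi {m n : ℕ} (σ : Fin m → List Bool) (α : Fin n → List Bool)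
    (c : Fin m × (ℤ → Fin n)) : Cantor × Cantor :=
  (cat (σ c.1) (epsConcat α fun k => c.2 (-(k + 1 : ℕ))),
    epsConcat α fun k => c.2 (k : ℕ))

/-! ### Basic lemmas on `cat` and dyadic intervals -/

lemma cat_apply_lt (α : List Bool) (ω : Cantor) {k : ℕ} (h : k < α.length) :
    cat α ω k = α.get ⟨k, h⟩ := dif_pos h

lemma cat_apply_ge (α : List Bool) (ω : Cantor) {k : ℕ} (h : ¬ k < α.length) :
    cat α ω k = ω (k - α.length) := dif_neg h

/-- Dropping a prefix of length `L`. -/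
def cdrop (L : ℕ) (x : Cantor) : Cantor := fun k => x (k + L)

lemma cdrop_cat (α : List Bool) (ψ : Cantor) : cdrop α.length (cat α ψ) = ψ := by
  funext k
  have h : ¬ (k + α.length < α.length) := by omega
  simp [cdrop, cat_apply_ge α ψ h]

lemma cat_injective (α : List Bool) : Function.Injective (cat α) := by
  intro a b hab
  have := congrArg (cdrop α.length) hab
  rwa [cdrop_cat, cdrop_cat] at this

lemma cat_nil (ω : Cantor) : cat [] ω = ω := by
  funext k; simp [cat]

lemma cat_append (β γ : List Bool) (ω : Cantor) :
    cat (β ++ γ) ω = cat β (cat γ ω) := by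
  funext k
  by_cases h : k < β.length
  · have h2 : k < (β ++ γ).length := by simp; omega
    rw [cat_apply_lt _ _ h2, cat_apply_lt _ _ h]
    simp [List.getElem_append, h]
  · rw [cat_apply_ge _ _ h]
    by_cases h2 : k < (β ++ γ).length
    · have h3 : k - β.length < γ.length := by simp at h2; omega
      rw [cat_apply_lt _ _ h2, cat_apply_lt _ _ h3]
      simp [List.getElem_append, h]
    · have h3 : ¬ k - β.length < γ.length := by simp at h2; omega
      rw [cat_apply_ge _ _ h2, cat_apply_ge _ _ h3]
      congr 1
      simp
      omega

lemma mem_dyadicI {x : Cantor} {α : List Bool} :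
    x ∈ dyadicI α ↔ ∀ (k : ℕ) (h : k < α.length), x k = α.get ⟨k, h⟩ := by
  constructor
  · rintro ⟨ψ, rfl⟩ k h
    exact cat_apply_lt α ψ h
  · intro h
    refine ⟨cdrop α.length x, ?_⟩
    funext k
    by_cases hk : k < α.length
    · rw [cat_apply_lt _ _ hk]; exact (h k hk).symm
    · rw [cat_apply_ge _ _ hk]
      simp [cdrop]
      congr 1
      omega

lemma isOpen_dyadicI (α : List Bool) : IsOpen (dyadicI α) := by
  have : dyadicI α = ⋂ (k : Fin α.length), {x : Cantor | x k = α.get k} := by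
    ext x
    simp only [Set.mem_iInter, Set.mem_setOf_eq, mem_dyadicI]
    exact ⟨fun h k => h k k.2, fun h k hk => h ⟨k, hk⟩⟩
  rw [this]
  refine isOpen_iInter_of_finite fun k => ?_
  have : {x : Cantor | x ↑k = α.get k} = (fun x : Cantor => x ↑k) ⁻¹' {α.get k} := by
    ext x; simp
  rw [this]
  exact (isOpen_discrete {α.get k}).preimage (continuous_apply (k : ℕ))

lemma rect_eq_prod (γ δ : List Bool) : rect γ δ = (dyadicI γ) ×ˢ (dyadicI δ) := by
  ext p
  simp [rect, dyadicI, Set.mem_range, eq_comm, Set.mem_prod]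

lemma isOpen_rect (γ δ : List Bool) : IsOpen (rect γ δ) := by
  rw [rect_eq_prod]; exact (isOpen_dyadicI γ).prod (isOpen_dyadicI δ)

lemma rect_disjoint_left {γ γ' δ δ' : List Bool}
    (h : Disjoint (dyadicI γ) (dyadicI γ')) : Disjoint (rect γ δ) (rect γ' δ') := by
  rw [rect_eq_prod, rect_eq_prod]
  exact Set.disjoint_prod.mpr (Or.inl h)

lemma rect_disjoint_right {γ γ' δ δ' : List Bool}
    (h : Disjoint (dyadicI δ) (dyadicI δ')) : Disjoint (rect γ δ) (rect γ' δ') := by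
  rw [rect_eq_prod, rect_eq_prod]
  exact Set.disjoint_prod.mpr (Or.inr h)

lemma dyadicI_append_subset (β γ : List Bool) : dyadicI (β ++ γ) ⊆ dyadicI β := by
  rintro x ⟨ψ, rfl⟩
  rw [cat_append]
  exact ⟨cat γ ψ, rfl⟩
/-! ### Lemmas on `epsConcat` -/

section Eps
variable {n : ℕ} (α : Fin n → List Bool)

lemma flatten_len_ge (x : ℕ → Fin n) (hαne : ∀ i, α i ≠ []) (M : ℕ) :
    M ≤ (((List.range M).map fun i => α (x i)).flatten).length := by
  induction M with
  | zero => simp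
  | succ M ih =>
    rw [List.range_succ, List.map_append, List.flatten_append, List.length_append]
    have h1 : 0 < (α (x M)).length := List.length_pos_iff.mpr (hαne _)
    simp only [List.map_cons, List.map_nil, List.flatten_cons, List.flatten_nil,
      List.append_nil]
    omega

lemma epsConcat_stable (x : ℕ → Fin n) (hαne : ∀ i, α i ≠ []) {mm M : ℕ} (h : mm < M) :
    epsConcat α x mm = (((List.range M).map fun i => α (x i)).flatten).getD mm false := by
  induction M with
  | zero => omega
  | succ M ih =>
    rcases Nat.lt_or_ge mm M with h2 | h2
    · rw [ih h2, List.range_succ, List.map_append, List.flatten_append,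
        List.getD_append]
      exact lt_of_lt_of_le h2 (flatten_len_ge α x hαne M)
    · have : M = mm := by omega
      subst this
      rfl

lemma epsConcat_shift (x : ℕ → Fin n) (hαne : ∀ i, α i ≠ []) :
    epsConcat α x = cat (α (x 0)) (epsConcat α fun k => x (k + 1)) := by
  funext mm
  have hflat : (((List.range (mm+1)).map fun i => α (x i)).flatten)
      = α (x 0) ++ ((List.range mm).map fun i => α (x (i+1))).flatten := by
    rw [List.range_succ_eq_map, List.map_cons, List.map_map, List.flatten_cons]
    rfl
  by_cases h : mm < (α (x 0)).length
  · rw [cat_apply_lt _ _ h]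
    show (((List.range (mm+1)).map fun i => α (x i)).flatten).getD mm false = _
    rw [hflat, List.getD_append _ _ _ _ h, List.getD_eq_getElem _ _ h]
    rfl
  · rw [cat_apply_ge _ _ h]
    show (((List.range (mm+1)).map fun i => α (x i)).flatten).getD mm false = _
    rw [hflat, List.getD_append_right _ _ _ _ (by omega)]
    have h1 : 0 < (α (x 0)).length := List.length_pos_iff.mpr (hαne _)
    rw [epsConcat_stable α _ hαne (show mm - (α (x 0)).length < mm by omega)]

end Eps
/-! ### Decomposition with respect to a partition into dyadic intervals -/

section Decomp
variable {N : ℕ} {β : Fin N → List Bool}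

lemma exists_decomp (hcover : (⋃ i, dyadicI (β i)) = Set.univ) (x : Cantor) :
    ∃ i ψ, x = cat (β i) ψ := by
  have : x ∈ (⋃ i, dyadicI (β i)) := hcover ▸ Set.mem_univ x
  rcases Set.mem_iUnion.mp this with ⟨i, ψ, hψ⟩
  exact ⟨i, ψ, hψ.symm⟩

lemma decomp_unique (hdisj : Pairwise fun i j => Disjoint (dyadicI (β i)) (dyadicI (β j)))
    {i j : Fin N} {ψ ψ' : Cantor} (h : cat (β i) ψ = cat (β j) ψ') :
    i = j ∧ ψ = ψ' := by
  have hij : i = j := by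
    by_contra hne
    exact Set.disjoint_left.mp (hdisj hne) ⟨ψ, rfl⟩ ⟨ψ', h.symm⟩
  subst hij
  exact ⟨rfl, cat_injective _ h⟩

/-- The index of the interval containing `x`. -/
noncomputable def decIdx (hcover : (⋃ i, dyadicI (β i)) = Set.univ) (x : Cantor) : Fin N :=
  (exists_decomp hcover x).choose

/-- The remainder after stripping the leading prefix from `x`. -/
noncomputable def decRest (hcover : (⋃ i, dyadicI (β i)) = Set.univ) (x : Cantor) : Cantor :=
  (exists_decomp hcover x).choose_spec.choose

lemma dec_spec (hcover : (⋃ i, dyadicI (β i)) = Set.univ) (x : Cantor) :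
    x = cat (β (decIdx hcover x)) (decRest hcover x) :=
  (exists_decomp hcover x).choose_spec.choose_spec

/-- The stream of indices obtained by repeatedly stripping prefixes. -/
noncomputable def dstream (hcover : (⋃ i, dyadicI (β i)) = Set.univ) :
    Cantor → ℕ → Fin N
  | x, 0 => decIdx hcover x
  | x, k + 1 => dstream hcover (decRest hcover x) k

lemma dstream_zero (hcover : (⋃ i, dyadicI (β i)) = Set.univ) (x : Cantor) :
    dstream hcover x 0 = decIdx hcover x := rfl

lemma dstream_succ (hcover : (⋃ i, dyadicI (β i)) = Set.univ) (x : Cantor) :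
    (fun k => dstream hcover x (k + 1)) = dstream hcover (decRest hcover x) := rfl

lemma eps_dstream (hβne : ∀ i, β i ≠ []) (hcover : (⋃ i, dyadicI (β i)) = Set.univ)
    (x : Cantor) : epsConcat β (dstream hcover x) = x := by
  suffices h : ∀ mm : ℕ, ∀ x : Cantor, epsConcat β (dstream hcover x) mm = x mm by
    funext mm; exact h mm x
  intro mm
  induction mm using Nat.strong_induction_on with
  | _ mm ih =>
    intro x
    rw [epsConcat_shift β _ hβne, dstream_succ hcover x, dstream_zero]
    conv_rhs => rw [dec_spec hcover x]
    by_cases h : mm < (β (decIdx hcover x)).length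
    · rw [cat_apply_lt _ _ h, cat_apply_lt _ _ h]
    · rw [cat_apply_ge _ _ h, cat_apply_ge _ _ h]
      have h1 : 0 < (β (decIdx hcover x)).length := List.length_pos_iff.mpr (hβne _)
      exact ih _ (by omega) _

lemma eps_injective (hβne : ∀ i, β i ≠ [])
    (hdisj : Pairwise fun i j => Disjoint (dyadicI (β i)) (dyadicI (β j))) :
    Function.Injective (epsConcat β) := by
  suffices h : ∀ k : ℕ, ∀ x y : ℕ → Fin N, epsConcat β x = epsConcat β y → x k = y k by
    intro x y hxy; funext k; exact h k x y hxy
  intro k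
  induction k with
  | zero =>
    intro x y hxy
    rw [epsConcat_shift β x hβne, epsConcat_shift β y hβne] at hxy
    exact (decomp_unique hdisj hxy).1
  | succ k ih =>
    intro x y hxy
    rw [epsConcat_shift β x hβne, epsConcat_shift β y hβne] at hxy
    obtain ⟨h0, htail⟩ := decomp_unique hdisj hxy
    exact ih _ _ htail

lemma eps_bijective (hβne : ∀ i, β i ≠ [])
    (hcover : (⋃ i, dyadicI (β i)) = Set.univ)
    (hdisj : Pairwise fun i j => Disjoint (dyadicI (β i)) (dyadicI (β j))) :
    Function.Bijective (epsConcat β) :=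
  ⟨eps_injective hβne hdisj, fun x => ⟨dstream hcover x, eps_dstream hβne hcover x⟩⟩

lemma dstream_eps (hβne : ∀ i, β i ≠ [])
    (hcover : (⋃ i, dyadicI (β i)) = Set.univ)
    (hdisj : Pairwise fun i j => Disjoint (dyadicI (β i)) (dyadicI (β j)))
    (x : ℕ → Fin N) : dstream hcover (epsConcat β x) = x :=
  eps_injective hβne hdisj (eps_dstream hβne hcover _)

end Decomp
/-! ### Tape combinators -/

section Tape
variable {n : ℕ}

/-- Combine two one-sided tapes into a two-sided tape. -/
def combT (l r : ℕ → Fin n) : ℤ → Fin n := fun z =>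
  match z with
  | Int.ofNat k => r k
  | Int.negSucc k => l k

/-- Prepend a symbol to a one-sided tape. -/
def consS (a : Fin n) (x : ℕ → Fin n) : ℕ → Fin n := fun k =>
  match k with
  | 0 => a
  | k + 1 => x k

/-- The left part of a two-sided tape. -/
def tapeL (τ : ℤ → Fin n) : ℕ → Fin n := fun k => τ (-(k + 1 : ℕ))

/-- The right part of a two-sided tape. -/
def tapeR (τ : ℤ → Fin n) : ℕ → Fin n := fun k => τ (k : ℕ)

lemma neg_nat_succ (k : ℕ) : (-(k + 1 : ℕ) : ℤ) = Int.negSucc k := by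
  rw [Int.negSucc_eq]; push_cast; ring

lemma tapeL_combT (l r : ℕ → Fin n) : tapeL (combT l r) = l := by
  funext k; rw [tapeL, neg_nat_succ]; rfl

lemma tapeR_combT (l r : ℕ → Fin n) : tapeR (combT l r) = r := by
  funext k; rfl

lemma combT_zero (l r : ℕ → Fin n) : combT l r 0 = r 0 := rfl

lemma combT_tape (τ : ℤ → Fin n) : combT (tapeL τ) (tapeR τ) = τ := by
  funext z
  match z with
  | Int.ofNat k => rfl
  | Int.negSucc k => show tapeL τ k = _; rw [tapeL, neg_nat_succ]

lemma tapeL_shiftR (τ : ℤ → Fin n) :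
    tapeL (shiftTape Dir.right τ) = consS (τ 0) (tapeL τ) := by
  funext k
  match k with
  | 0 => exact congrArg τ (by omega)
  | k + 1 => exact congrArg τ (by omega)

lemma tapeR_shiftR (τ : ℤ → Fin n) :
    tapeR (shiftTape Dir.right τ) = fun k => tapeR τ (k + 1) := by
  funext k
  exact congrArg τ (by omega)

lemma tapeL_shiftL (τ : ℤ → Fin n) :
    tapeL (shiftTape Dir.left τ) = fun k => tapeL τ (k + 1) := by
  funext k
  exact congrArg τ (by omega)

lemma tapeR_shiftL (τ : ℤ → Fin n) :
    tapeR (shiftTape Dir.left τ) = consS (tapeL τ 0) (tapeR τ) := by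
  funext k
  match k with
  | 0 => exact congrArg τ (by omega)
  | k + 1 => exact congrArg τ (by omega)

lemma tapeL_write (b : Fin n) (τ : ℤ → Fin n) : tapeL (writeTape b τ) = tapeL τ := by
  funext k
  show (if (-(k + 1 : ℕ) : ℤ) = 0 then b else τ (-(k + 1 : ℕ))) = tapeL τ k
  rw [if_neg (by omega)]; rfl

lemma tapeR_write (b : Fin n) (τ : ℤ → Fin n) :
    tapeR (writeTape b τ) = consS b (fun k => tapeR τ (k + 1)) := by
  funext k
  match k with
  | 0 =>
    show (if ((0 : ℕ) : ℤ) = 0 then b else τ ((0 : ℕ) : ℤ)) = b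
    rw [if_pos (by omega)]
  | k + 1 =>
    show (if ((k + 1 : ℕ) : ℤ) = 0 then b else τ ((k + 1 : ℕ) : ℤ)) = τ ((k + 1 : ℕ) : ℤ)
    rw [if_neg (by omega)]

lemma writeTape_writeTape {A : Type} (b a : A) (τ : ℤ → A) :
    writeTape b (writeTape a τ) = writeTape b τ := by
  funext z; unfold writeTape; split <;> rfl

lemma writeTape_self {A : Type} (τ : ℤ → A) : writeTape (τ 0) τ = τ := by
  funext z; unfold writeTape; split
  · next h => rw [h]
  · rfl

lemma writeTape_zero {A : Type} (a : A) (τ : ℤ → A) : writeTape a τ 0 = a := rfl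

lemma shiftTape_LR {A : Type} (τ : ℤ → A) :
    shiftTape Dir.left (shiftTape Dir.right τ) = τ := by
  funext z; exact congrArg τ (by omega)

lemma shiftTape_RL {A : Type} (τ : ℤ → A) :
    shiftTape Dir.right (shiftTape Dir.left τ) = τ := by
  funext z; exact congrArg τ (by omega)

/-- The opposite direction. -/
def Dir.op : Dir → Dir
  | Dir.left => Dir.right
  | Dir.right => Dir.left

lemma shiftTape_op {A : Type} (δ : Dir) (τ : ℤ → A) :
    shiftTape δ (shiftTape δ.op τ) = τ := by
  cases δ
  · exact shiftTape_LR τ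
  · exact shiftTape_RL τ

end Tape
/-! ### Machine lemmas -/

section Machine
variable {m n : ℕ} {M : TuringMachine (Fin m) (Fin n)}
  {F : Fin m × (ℤ → Fin n) → Fin m × (ℤ → Fin n)}

lemma step_F (hcomp : Complete M) (hF : ∀ c c', TMStep M c c' ↔ c' = F c)
    (c : Fin m × (ℤ → Fin n)) : TMStep M c (F c) := by
  obtain ⟨c', hc'⟩ := hcomp c
  have := (hF c c').mp hc'
  rwa [this] at hc'

lemma F_inj (hcomp : Complete M) (hrev : Reversible M)
    (hF : ∀ c c', TMStep M c c' ↔ c' = F c) : Function.Injective F := by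
  intro c₁ c₂ h
  have h1 := step_F hcomp hF c₁
  have h2 := step_F hcomp hF c₂
  rw [← h] at h2
  exact hrev.2 c₁ c₂ (F c₁) h1 h2

lemma behave (hcomp : Complete M) (hrev : Reversible M)
    (hF : ∀ c c', TMStep M c c' ↔ c' = F c) (s : Fin m) :
    ∃ e : (Dir × Fin m) ⊕ (Fin n → Fin m × Fin n),
      (∀ δ s₀, e = Sum.inl (δ, s₀) → ∀ τ, F (s, τ) = (s₀, shiftTape δ τ)) ∧
      (∀ w, e = Sum.inr w → ∀ a τ, τ 0 = a →
        F (s, τ) = ((w a).1, writeTape (w a).2 τ)) := by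
  by_cases h : ∃ δ s₀, (s, δ, s₀) ∈ M.moves
  · obtain ⟨δ, s₀, hm⟩ := h
    refine ⟨Sum.inl (δ, s₀), ?_, ?_⟩
    · rintro δ' s₀' he τ
      obtain ⟨rfl, rfl⟩ : δ = δ' ∧ s₀ = s₀' := by
        simpa [Prod.ext_iff] using he
      have : TMStep M (s, τ) (s₀, shiftTape δ τ) := Or.inl ⟨δ, hm, rfl⟩
      exact ((hF _ _).mp this).symm
    · intro w he; exact absurd he (by simp)
  · have hwr : ∀ a : Fin n, ∃ t b, ∀ τ : ℤ → Fin n, τ 0 = a →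
        F (s, τ) = (t, writeTape b τ) := by
      intro a
      have hs := step_F hcomp hF (s, fun _ => a)
      rcases hs with ⟨δ, hm, -⟩ | ⟨a₀, b, hw, h0, -⟩
      · exact absurd ⟨δ, _, hm⟩ h
      · rw [show a₀ = a from h0.symm] at hw
        refine ⟨(F (s, fun _ => a)).1, b, fun τ hτ => ?_⟩
        have : TMStep M (s, τ) ((F (s, fun _ => a)).1, writeTape b τ) :=
          Or.inr ⟨a, b, hw, hτ, rfl⟩
        exact ((hF _ _).mp this).symm
    choose t b hb using hwr
    refine ⟨Sum.inr fun a => (t a, b a), ?_, ?_⟩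
    · intro δ s₀ he; exact absurd he (by simp)
    · rintro w he a τ hτ
      obtain rfl : (fun a => (t a, b a)) = w := by simpa using he
      exact hb a τ hτ

lemma F_surj (hcomp : Complete M) (hrev : Reversible M)
    (hF : ∀ c c', TMStep M c c' ↔ c' = F c) : Function.Surjective F := by
  have Finj := F_inj hcomp hrev hF
  choose beh hbeh1 hbeh2 using behave hcomp hrev hF
  set G : Fin m × Fin n → Fin m × Fin n := fun p =>
    match beh p.1 with
    | Sum.inl (δ, s₀) => (s₀, p.2)
    | Sum.inr w => w p.2 with hG
  have Ginj : Function.Injective G := by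
    rintro ⟨s₁, a₁⟩ ⟨s₂, a₂⟩ hEq
    rcases h1 : beh s₁ with ⟨δ₁, t₁⟩ | w₁ <;> rcases h2 : beh s₂ with ⟨δ₂, t₂⟩ | w₂ <;>
      simp only [hG, h1, h2] at hEq
    · obtain ⟨rfl, rfl⟩ : t₁ = t₂ ∧ a₁ = a₂ := by simpa [Prod.ext_iff] using hEq
      have e₁ : F (s₁, shiftTape δ₁.op (fun _ => a₁)) = (t₁, fun _ => a₁) := by
        rw [hbeh1 s₁ δ₁ t₁ h1, shiftTape_op]
      have e₂ : F (s₂, shiftTape δ₂.op (fun _ => a₁)) = (t₁, fun _ => a₁) := by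
        rw [hbeh1 s₂ δ₂ t₁ h2, shiftTape_op]
      have := Finj (e₁.trans e₂.symm)
      obtain rfl : s₁ = s₂ := congrArg Prod.fst this
      exact rfl
    · -- s₁ moves, s₂ writes : contradiction
      exfalso
      have ht : (w₂ a₂).1 = t₁ := by rw [← hEq]
      have hb : (w₂ a₂).2 = a₁ := by rw [← hEq]
      set τ₀ : ℤ → Fin n := fun _ => a₂ with hτ₀
      have e₂ : F (s₂, writeTape a₂ τ₀) = (t₁, writeTape a₁ τ₀) := by
        rw [hbeh2 s₂ w₂ h2 a₂ (writeTape a₂ τ₀) (writeTape_zero _ _), ht, hb,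
          writeTape_writeTape]
      have e₁ : F (s₁, shiftTape δ₁.op (writeTape a₁ τ₀)) = (t₁, writeTape a₁ τ₀) := by
        rw [hbeh1 s₁ δ₁ t₁ h1, shiftTape_op]
      have := Finj (e₁.trans e₂.symm)
      obtain rfl : s₁ = s₂ := congrArg Prod.fst this
      rw [h1] at h2
      simp at h2
    · -- s₁ writes, s₂ moves : contradiction
      exfalso
      have ht : (w₁ a₁).1 = t₂ := by rw [hEq]
      have hb : (w₁ a₁).2 = a₂ := by rw [hEq]
      set τ₀ : ℤ → Fin n := fun _ => a₁ with hτ₀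
      have e₁ : F (s₁, writeTape a₁ τ₀) = (t₂, writeTape a₂ τ₀) := by
        rw [hbeh2 s₁ w₁ h1 a₁ (writeTape a₁ τ₀) (writeTape_zero _ _), ht, hb,
          writeTape_writeTape]
      have e₂ : F (s₂, shiftTape δ₂.op (writeTape a₂ τ₀)) = (t₂, writeTape a₂ τ₀) := by
        rw [hbeh1 s₂ δ₂ t₂ h2, shiftTape_op]
      have := Finj (e₁.trans e₂.symm)
      obtain rfl : s₁ = s₂ := congrArg Prod.fst this
      rw [h1] at h2
      simp at h2
    · -- both write
      set τ₀ : ℤ → Fin n := fun _ => a₁ with hτ₀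
      have e₁ : F (s₁, writeTape a₁ τ₀) = ((w₁ a₁).1, writeTape (w₁ a₁).2 τ₀) := by
        rw [hbeh2 s₁ w₁ h1 a₁ (writeTape a₁ τ₀) (writeTape_zero _ _),
          writeTape_writeTape]
      have e₂ : F (s₂, writeTape a₂ τ₀) = ((w₁ a₁).1, writeTape (w₁ a₁).2 τ₀) := by
        rw [hbeh2 s₂ w₂ h2 a₂ (writeTape a₂ τ₀) (writeTape_zero _ _),
          writeTape_writeTape, ← hEq]
      have := Finj (e₁.trans e₂.symm)
      obtain rfl : s₁ = s₂ := congrArg Prod.fst this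
      have h2' : writeTape a₁ τ₀ = writeTape a₂ τ₀ := congrArg Prod.snd this
      have : a₁ = a₂ := by
        have := congrFun h2' 0
        rwa [writeTape_zero, writeTape_zero] at this
      rw [this]
  have Gsurj : Function.Surjective G :=
    ((Finite.injective_iff_bijective).mp Ginj).2
  rintro ⟨s', τ'⟩
  obtain ⟨⟨s, a⟩, hsa⟩ := Gsurj (s', τ' 0)
  rcases h1 : beh s with ⟨δ, s₀⟩ | w <;> simp only [hG, h1] at hsa
  · obtain ⟨rfl, rfl⟩ : s₀ = s' ∧ a = τ' 0 := by simpa [Prod.ext_iff] using hsa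
    exact ⟨(s, shiftTape δ.op τ'), by rw [hbeh1 s δ s₀ h1, shiftTape_op]⟩
  · refine ⟨(s, writeTape a τ'), ?_⟩
    rw [hbeh2 s w h1 a (writeTape a τ') (writeTape_zero _ _), writeTape_writeTape, hsa,
      writeTape_self]
end Machine
/-! ### `Phi` lemmas -/

section PhiLemmas
variable {m n : ℕ} (σ : Fin m → List Bool) (α : Fin n → List Bool)

lemma Phi_eq (c : Fin m × (ℤ → Fin n)) :
    Phi σ α c = (cat (σ c.1) (epsConcat α (tapeL c.2)), epsConcat α (tapeR c.2)) := rfl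

lemma epsConcat_consS (hαne : ∀ i, α i ≠ []) (a : Fin n) (x : ℕ → Fin n) :
    epsConcat α (consS a x) = cat (α a) (epsConcat α x) := by
  rw [epsConcat_shift α _ hαne]; rfl

lemma Phi_injective (hσdisj : Pairwise fun i j => Disjoint (dyadicI (σ i)) (dyadicI (σ j)))
    (hαne : ∀ i, α i ≠ [])
    (hαdisj : Pairwise fun i j => Disjoint (dyadicI (α i)) (dyadicI (α j))) :
    Function.Injective (Phi σ α) := by
  rintro ⟨s₁, τ₁⟩ ⟨s₂, τ₂⟩ h
  rw [Phi_eq, Phi_eq, Prod.ext_iff] at h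
  obtain ⟨h1, h2⟩ := h
  obtain ⟨rfl, hL⟩ := decomp_unique hσdisj h1
  have hLeq : tapeL τ₁ = tapeL τ₂ := eps_injective hαne hαdisj hL
  have hReq : tapeR τ₁ = tapeR τ₂ := eps_injective hαne hαdisj h2
  have : τ₁ = τ₂ := by
    rw [← combT_tape τ₁, ← combT_tape τ₂, hLeq, hReq]
  rw [this]

lemma Phi_surjective (hσcover : (⋃ i, dyadicI (σ i)) = Set.univ)
    (hαne : ∀ i, α i ≠ []) (hαcover : (⋃ i, dyadicI (α i)) = Set.univ) :
    Function.Surjective (Phi σ α) := by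
  rintro ⟨x, y⟩
  obtain ⟨i, ψ, hψ⟩ := exists_decomp hσcover x
  refine ⟨(i, combT (dstream hαcover ψ) (dstream hαcover y)), ?_⟩
  rw [Phi_eq]
  simp only [tapeL_combT, tapeR_combT]
  rw [eps_dstream hαne hαcover, eps_dstream hαne hαcover, ← hψ]

end PhiLemmas

/-! ### Subdivision helpers -/

lemma dyadicI_append_disjoint {β γ γ' : List Bool}
    (h : Disjoint (dyadicI γ) (dyadicI γ')) :
    Disjoint (dyadicI (β ++ γ)) (dyadicI (β ++ γ')) := by
  rw [Set.disjoint_left]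
  rintro x ⟨ψ, rfl⟩ ⟨ψ', hx⟩
  rw [cat_append, cat_append] at hx
  have := cat_injective β hx
  exact Set.disjoint_left.mp h ⟨ψ, rfl⟩ ⟨ψ', this⟩

lemma pairwise_flatMap {β γ : Type*} {l : List β} {f : β → List γ} {R : γ → γ → Prop}
    (h1 : ∀ b ∈ l, (f b).Pairwise R)
    (h2 : l.Pairwise fun b b' => ∀ x ∈ f b, ∀ y ∈ f b', R x y) :
    (l.flatMap f).Pairwise R := by
  induction l with
  | nil => simp
  | cons b l ih =>
    rw [List.flatMap_cons, List.pairwise_append]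
    rw [List.pairwise_cons] at h2
    refine ⟨h1 b (List.mem_cons_self), ih (fun b' hb' => h1 b' (List.mem_cons_of_mem _ hb')) h2.2, ?_⟩
    intro x hx y hy
    rw [List.mem_flatMap] at hy
    obtain ⟨b', hb', hy⟩ := hy
    exact h2.1 b' hb' x hx y hy

lemma image_rect {f : Equiv.Perm (Cantor × Cantor)} {γ δ γ' δ' : List Bool}
    (h : ∀ ψ ω, f (cat γ ψ, cat δ ω) = (cat γ' ψ, cat δ' ω)) :
    f '' rect γ δ = rect γ' δ' := by
  ext p
  constructor
  · rintro ⟨q, ⟨⟨ψ, hψ⟩, ⟨ω, hω⟩⟩, rfl⟩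
    have hq : q = (cat γ ψ, cat δ ω) := Prod.ext hψ hω
    rw [hq, h]
    exact ⟨⟨ψ, rfl⟩, ⟨ω, rfl⟩⟩
  · rintro ⟨⟨ψ, hψ⟩, ⟨ω, hω⟩⟩
    refine ⟨(cat γ ψ, cat δ ω), ⟨⟨ψ, rfl⟩, ⟨ω, rfl⟩⟩, ?_⟩
    rw [h]
    exact (Prod.ext hψ hω).symm

lemma snd_subdivision {f : Equiv.Perm (Cantor × Cantor)} {pp : PatternPair}
    (hfst : IsSubdivision (pp.map Prod.fst))
    (hmaps : ∀ r ∈ pp, ∀ ψ ω : Cantor,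
      f (cat r.1.1 ψ, cat r.1.2 ω) = (cat r.2.1 ψ, cat r.2.2 ω)) :
    IsSubdivision (pp.map Prod.snd) := by
  constructor
  · rw [Set.eq_univ_iff_forall]
    intro p
    have hq : f.symm p ∈ ⋃ r ∈ pp.map Prod.fst, rect r.1 r.2 := by
      rw [hfst.1]; trivial
    rw [Set.mem_iUnion₂] at hq
    obtain ⟨r, hr, hmem⟩ := hq
    rw [List.mem_map] at hr
    obtain ⟨e, he, rfl⟩ := hr
    rw [Set.mem_iUnion₂]
    refine ⟨e.2, List.mem_map.mpr ⟨e, he, rfl⟩, ?_⟩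
    rw [← image_rect (hmaps e he)]
    exact ⟨f.symm p, hmem, f.apply_symm_apply p⟩
  · have := hfst.2
    rw [List.pairwise_map] at this ⊢
    refine List.Pairwise.imp_of_mem ?_ this
    intro r r' hr hr' hd
    rw [← image_rect (hmaps r hr), ← image_rect (hmaps r' hr')]
    exact Set.disjoint_image_of_injective f.injective hd

/-! ### Continuity helpers -/

lemma continuous_cat (γ : List Bool) : Continuous (cat γ) := by
  refine continuous_pi fun k => ?_
  by_cases h : k < γ.length
  · have : (fun ψ : Cantor => cat γ ψ k) = fun _ => γ.get ⟨k, h⟩ := by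
      funext ψ; exact cat_apply_lt γ ψ h
    rw [this]; exact continuous_const
  · have : (fun ψ : Cantor => cat γ ψ k) = fun ψ => ψ (k - γ.length) := by
      funext ψ; exact cat_apply_ge γ ψ h
    rw [this]; exact continuous_apply _

lemma continuous_cdrop (L : ℕ) : Continuous (cdrop L) :=
  continuous_pi fun k => continuous_apply (k + L)

lemma continuous_of_represents {f : Cantor × Cantor → Cantor × Cantor} {pp : PatternPair}
    (hcov : (⋃ r ∈ pp.map Prod.fst, rect r.1 r.2) = Set.univ)
    (hmaps : ∀ r ∈ pp, ∀ ψ ω : Cantor,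
      f (cat r.1.1 ψ, cat r.1.2 ω) = (cat r.2.1 ψ, cat r.2.2 ω)) :
    Continuous f := by
  rw [continuous_iff_continuousAt]
  intro p
  have hp : p ∈ ⋃ r ∈ pp.map Prod.fst, rect r.1 r.2 := by rw [hcov]; trivial
  rw [Set.mem_iUnion₂] at hp
  obtain ⟨r, hr, hmem⟩ := hp
  rw [List.mem_map] at hr
  obtain ⟨e, he, rfl⟩ := hr
  set g : Cantor × Cantor → Cantor × Cantor := fun q =>
    (cat e.2.1 (cdrop e.1.1.length q.1), cat e.2.2 (cdrop e.1.2.length q.2)) with hg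
  have hgc : Continuous g := by
    apply Continuous.prodMk
    · exact (continuous_cat _).comp ((continuous_cdrop _).comp continuous_fst)
    · exact (continuous_cat _).comp ((continuous_cdrop _).comp continuous_snd)
  have heq : Set.EqOn f g (rect e.1.1 e.1.2) := by
    rintro q ⟨⟨ψ, hψ⟩, ⟨ω, hω⟩⟩
    have hq : q = (cat e.1.1 ψ, cat e.1.2 ω) := Prod.ext hψ hω
    rw [hq, hmaps e he, hg]
    simp only [cdrop_cat]
  exact (hgc.continuousAt).congr
    ((Filter.eventuallyEq_of_mem ((isOpen_rect _ _).mem_nhds hmem) heq).symm)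
/-! ### Pattern-pair entries -/

/-- The entry of the pattern pair for state `s`, behavior `e`, and symbol `a`. -/
def ppEntry {m n : ℕ} (σ : Fin m → List Bool) (α : Fin n → List Bool)
    (e : (Dir × Fin m) ⊕ (Fin n → Fin m × Fin n)) (s : Fin m) (a : Fin n) :
    (List Bool × List Bool) × (List Bool × List Bool) :=
  match e with
  | Sum.inl (Dir.right, s₀) => ((σ s, α a), (σ s₀ ++ α a, []))
  | Sum.inl (Dir.left, s₀) => ((σ s ++ α a, []), (σ s₀, α a))
  | Sum.inr w => ((σ s, α a), (σ (w a).1, α (w a).2))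

section PpEntry
variable {m n : ℕ} {σ : Fin m → List Bool} {α : Fin n → List Bool}

lemma ppEntry_fst_subset (e : (Dir × Fin m) ⊕ (Fin n → Fin m × Fin n)) (s : Fin m)
    (a : Fin n) : dyadicI ((ppEntry σ α e s a).1.1) ⊆ dyadicI (σ s) := by
  match e with
  | Sum.inl (Dir.right, s₀) => exact subset_rfl
  | Sum.inl (Dir.left, s₀) => exact dyadicI_append_subset _ _
  | Sum.inr w => exact subset_rfl

lemma ppEntry_fst_disjoint_same
    (hαdisj : Pairwise fun i j => Disjoint (dyadicI (α i)) (dyadicI (α j)))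
    (e : (Dir × Fin m) ⊕ (Fin n → Fin m × Fin n)) (s : Fin m) {a a' : Fin n}
    (hne : a ≠ a') :
    Disjoint (rect (ppEntry σ α e s a).1.1 (ppEntry σ α e s a).1.2)
      (rect (ppEntry σ α e s a').1.1 (ppEntry σ α e s a').1.2) := by
  match e with
  | Sum.inl (Dir.right, s₀) => exact rect_disjoint_right (hαdisj hne)
  | Sum.inl (Dir.left, s₀) =>
    exact rect_disjoint_left (dyadicI_append_disjoint (hαdisj hne))
  | Sum.inr w => exact rect_disjoint_right (hαdisj hne)

lemma ppEntry_cover (hαcover : (⋃ i, dyadicI (α i)) = Set.univ)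
    (e : (Dir × Fin m) ⊕ (Fin n → Fin m × Fin n)) (s : Fin m) (p : Cantor × Cantor)
    (hp : p.1 ∈ dyadicI (σ s)) :
    ∃ a, p ∈ rect (ppEntry σ α e s a).1.1 (ppEntry σ α e s a).1.2 := by
  obtain ⟨ψ, hψ⟩ := hp
  match e with
  | Sum.inl (Dir.right, s₀) =>
    obtain ⟨a, ω, hω⟩ := exists_decomp hαcover p.2
    exact ⟨a, ⟨ψ, hψ.symm⟩, ⟨ω, hω⟩⟩
  | Sum.inl (Dir.left, s₀) =>
    obtain ⟨a, ψ', hψ'⟩ := exists_decomp hαcover ψ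
    refine ⟨a, ⟨ψ', ?_⟩, ⟨p.2, (cat_nil p.2).symm⟩⟩
    show p.1 = cat (σ s ++ α a) ψ'
    rw [cat_append, ← hψ', hψ]
  | Sum.inr w =>
    obtain ⟨a, ω, hω⟩ := exists_decomp hαcover p.2
    exact ⟨a, ⟨ψ, hψ.symm⟩, ⟨ω, hω⟩⟩

end PpEntry

/-! ### Computation of the conjugated map on rectangles -/

section MapCompute
variable {m n : ℕ} {σ : Fin m → List Bool} {α : Fin n → List Bool}
  {F : Fin m × (ℤ → Fin n) → Fin m × (ℤ → Fin n)}
  {f : Equiv.Perm (Cantor × Cantor)}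

lemma map_right (hfPhi : ∀ c, f (Phi σ α c) = Phi σ α (F c))
    (hαne : ∀ i, α i ≠ []) (hαcover : (⋃ i, dyadicI (α i)) = Set.univ)
    {s s₀ : Fin m} (hs : ∀ τ, F (s, τ) = (s₀, shiftTape Dir.right τ))
    (a : Fin n) (ψ ω : Cantor) :
    f (cat (σ s) ψ, cat (α a) ω) = (cat (σ s₀ ++ α a) ψ, cat [] ω) := by
  set l := dstream hαcover ψ with hl
  set r' := dstream hαcover ω with hr'
  set τ : ℤ → Fin n := combT l (consS a r') with hτ
  have hdom : Phi σ α (s, τ) = (cat (σ s) ψ, cat (α a) ω) := by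
    rw [Phi_eq, hτ]
    simp only [tapeL_combT, tapeR_combT]
    rw [epsConcat_consS α hαne, hl, hr', eps_dstream hαne hαcover,
      eps_dstream hαne hαcover]
  rw [← hdom, hfPhi, hs, Phi_eq]
  simp only [tapeL_shiftR, tapeR_shiftR]
  have h0 : τ 0 = a := rfl
  have hL : tapeL τ = l := by rw [hτ, tapeL_combT]
  have hR : (fun k => tapeR τ (k + 1)) = r' := by
    funext k; rw [hτ, tapeR_combT]; rfl
  rw [h0, hL, hR, epsConcat_consS α hαne, hl, hr', eps_dstream hαne hαcover,
    eps_dstream hαne hαcover, cat_nil, ← cat_append]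

lemma map_left (hfPhi : ∀ c, f (Phi σ α c) = Phi σ α (F c))
    (hαne : ∀ i, α i ≠ []) (hαcover : (⋃ i, dyadicI (α i)) = Set.univ)
    {s s₀ : Fin m} (hs : ∀ τ, F (s, τ) = (s₀, shiftTape Dir.left τ))
    (a : Fin n) (ψ ω : Cantor) :
    f (cat (σ s ++ α a) ψ, cat [] ω) = (cat (σ s₀) ψ, cat (α a) ω) := by
  set l' := dstream hαcover ψ with hl'
  set r := dstream hαcover ω with hr
  set τ : ℤ → Fin n := combT (consS a l') r with hτ
  have hdom : Phi σ α (s, τ) = (cat (σ s ++ α a) ψ, cat [] ω) := by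
    rw [Phi_eq, hτ]
    simp only [tapeL_combT, tapeR_combT]
    rw [epsConcat_consS α hαne, hl', hr, eps_dstream hαne hαcover,
      eps_dstream hαne hαcover, cat_append, cat_nil]
  rw [← hdom, hfPhi, hs, Phi_eq]
  simp only [tapeL_shiftL, tapeR_shiftL]
  have hL : (fun k => tapeL τ (k + 1)) = l' := by
    funext k; rw [hτ, tapeL_combT]; rfl
  have hL0 : tapeL τ 0 = a := by rw [hτ, tapeL_combT]; rfl
  have hR : tapeR τ = r := by rw [hτ, tapeR_combT]
  rw [hL, hL0, hR, epsConcat_consS α hαne, hl', hr, eps_dstream hαne hαcover,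
    eps_dstream hαne hαcover]

lemma map_write (hfPhi : ∀ c, f (Phi σ α c) = Phi σ α (F c))
    (hαne : ∀ i, α i ≠ []) (hαcover : (⋃ i, dyadicI (α i)) = Set.univ)
    {s t : Fin m} {a b : Fin n}
    (hs : ∀ τ : ℤ → Fin n, τ 0 = a → F (s, τ) = (t, writeTape b τ))
    (ψ ω : Cantor) :
    f (cat (σ s) ψ, cat (α a) ω) = (cat (σ t) ψ, cat (α b) ω) := by
  set l := dstream hαcover ψ with hl
  set r' := dstream hαcover ω with hr'
  set τ : ℤ → Fin n := combT l (consS a r') with hτ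
  have hdom : Phi σ α (s, τ) = (cat (σ s) ψ, cat (α a) ω) := by
    rw [Phi_eq, hτ]
    simp only [tapeL_combT, tapeR_combT]
    rw [epsConcat_consS α hαne, hl, hr', eps_dstream hαne hαcover,
      eps_dstream hαne hαcover]
  rw [← hdom, hfPhi, hs τ rfl, Phi_eq]
  simp only [tapeL_write, tapeR_write]
  have hL : tapeL τ = l := by rw [hτ, tapeL_combT]
  have hR : (fun k => tapeR τ (k + 1)) = r' := by
    funext k; rw [hτ, tapeR_combT]; rfl
  rw [hL, hR, epsConcat_consS α hαne, hl, hr', eps_dstream hαne hαcover,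
    eps_dstream hαne hαcover]

end MapCompute
/-- Given a complete, reversible Turing machine with transition function `F`, and
encodings of the states and tape symbols by partitions of Cantor space into dyadic
intervals, the configuration encoding `Φ` is a bijection onto `C²`, and the conjugate
map `f_T = Φ ∘ F ∘ Φ⁻¹` is an element of the Brin–Thompson group `2V`. -/
theorem turing_machine_gives_element_of_2V {m n : ℕ}
    (M : TuringMachine (Fin m) (Fin n)) (hcomp : Complete M) (hrev : Reversible M)
    (F : Fin m × (ℤ → Fin n) → Fin m × (ℤ → Fin n))
    (hF : ∀ c c', TMStep M c c' ↔ c' = F c)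
    (σ : Fin m → List Bool) (hσne : ∀ i, σ i ≠ [])
    (hσcover : (⋃ i, dyadicI (σ i)) = Set.univ)
    (hσdisj : Pairwise fun i j => Disjoint (dyadicI (σ i)) (dyadicI (σ j)))
    (α : Fin n → List Bool) (hαne : ∀ i, α i ≠ [])
    (hαcover : (⋃ i, dyadicI (α i)) = Set.univ)
    (hαdisj : Pairwise fun i j => Disjoint (dyadicI (α i)) (dyadicI (α j))) :
    Function.Bijective (Phi σ α) ∧
      ∃ f : Equiv.Perm (Cantor × Cantor),
        (∀ c, f (Phi σ α c) = Phi σ α (F c)) ∧ MemTwoV f := by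
  have hPhiBij : Function.Bijective (Phi σ α) :=
    ⟨Phi_injective σ α hσdisj hαne hαdisj, Phi_surjective σ α hσcover hαne hαcover⟩
  refine ⟨hPhiBij, ?_⟩
  have hFbij : Function.Bijective F := ⟨F_inj hcomp hrev hF, F_surj hcomp hrev hF⟩
  set ePhi : (Fin m × (ℤ → Fin n)) ≃ (Cantor × Cantor) :=
    Equiv.ofBijective _ hPhiBij with hePhi
  set eF : Equiv.Perm (Fin m × (ℤ → Fin n)) := Equiv.ofBijective F hFbij with heF
  set f : Equiv.Perm (Cantor × Cantor) := (ePhi.symm.trans eF).trans ePhi with hfdef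
  have hfPhi : ∀ c, f (Phi σ α c) = Phi σ α (F c) := by
    intro c
    show ePhi (eF (ePhi.symm (Phi σ α c))) = Phi σ α (F c)
    have hc : ePhi.symm (Phi σ α c) = c := by
      apply ePhi.injective
      rw [Equiv.apply_symm_apply]
      rfl
    rw [hc]
    rfl
  refine ⟨f, hfPhi, ?_⟩
  choose beh hbeh1 hbeh2 using behave hcomp hrev hF
  set pp : PatternPair := (List.finRange m).flatMap fun s =>
    (List.finRange n).map fun a => ppEntry σ α (beh s) s a with hpp
  -- the prefix-replacement property
  have hmaps : ∀ r ∈ pp, ∀ ψ ω : Cantor,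
      f (cat r.1.1 ψ, cat r.1.2 ω) = (cat r.2.1 ψ, cat r.2.2 ω) := by
    intro r hr ψ ω
    rw [hpp, List.mem_flatMap] at hr
    obtain ⟨s, -, hr⟩ := hr
    rw [List.mem_map] at hr
    obtain ⟨a, -, rfl⟩ := hr
    rcases hb : beh s with ⟨δ, s₀⟩ | w
    · cases δ
      · -- left
        show f (cat (σ s ++ α a) ψ, cat [] ω) = (cat (σ s₀) ψ, cat (α a) ω)
        exact map_left hfPhi hαne hαcover (hbeh1 s Dir.left s₀ hb) a ψ ω
      · -- right
        show f (cat (σ s) ψ, cat (α a) ω) = (cat (σ s₀ ++ α a) ψ, cat [] ω)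
        exact map_right hfPhi hαne hαcover (hbeh1 s Dir.right s₀ hb) a ψ ω
    · show f (cat (σ s) ψ, cat (α a) ω) = (cat (σ (w a).1) ψ, cat (α (w a).2) ω)
      exact map_write hfPhi hαne hαcover
        (fun τ hτ => hbeh2 s w hb a τ hτ) ψ ω
  -- the domain subdivision
  have hdomeq : pp.map Prod.fst = (List.finRange m).flatMap fun s =>
      (List.finRange n).map fun a => (ppEntry σ α (beh s) s a).1 := by
    rw [hpp, List.map_flatMap]
    congr 1
    funext s
    rw [List.map_map]
    rfl
  have hdom : IsSubdivision (pp.map Prod.fst) := by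
    constructor
    · rw [Set.eq_univ_iff_forall]
      intro p
      have hp1 : p.1 ∈ ⋃ i, dyadicI (σ i) := by rw [hσcover]; trivial
      rw [Set.mem_iUnion] at hp1
      obtain ⟨s, hs⟩ := hp1
      obtain ⟨a, ha⟩ := ppEntry_cover hαcover (beh s) s p hs
      rw [Set.mem_iUnion₂]
      refine ⟨(ppEntry σ α (beh s) s a).1, ?_, ha⟩
      rw [hdomeq, List.mem_flatMap]
      exact ⟨s, List.mem_finRange s,
        List.mem_map.mpr ⟨a, List.mem_finRange a, rfl⟩⟩
    · rw [hdomeq]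
      apply pairwise_flatMap
      · intro s _
        rw [List.pairwise_map]
        have hne : (List.finRange n).Pairwise (· ≠ ·) := List.nodup_finRange n
        exact hne.imp_of_mem fun {a a'} _ _ hne' =>
          ppEntry_fst_disjoint_same hαdisj (beh s) s hne'
      · have hne : (List.finRange m).Pairwise (· ≠ ·) := List.nodup_finRange m
        refine hne.imp_of_mem fun {s s'} _ _ hss' => ?_
        intro x hx y hy
        rw [List.mem_map] at hx hy
        obtain ⟨a, -, rfl⟩ := hx
        obtain ⟨a', -, rfl⟩ := hy
        exact rect_disjoint_left ((hσdisj hss').mono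
          (ppEntry_fst_subset (beh s) s a) (ppEntry_fst_subset (beh s') s' a'))
  refine ⟨continuous_of_represents hdom.1 hmaps, ?_, pp, hdom,
    snd_subdivision hdom hmaps, hmaps⟩
  -- continuity of the inverse
  have hc : Continuous ⇑f := continuous_of_represents hdom.1 hmaps
  exact (Continuous.homeoOfEquivCompactToT2 (f := f) hc).symm.continuous
end
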